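/- Let α ≥ 2 be an integer and let C be a minimal d_α-D_α cut in A_α with C ≠ {d_α}. Then for every nonempty S ⊆ {1,…,α−1}: if d_S ∉ C, then d_T ∉ C for every nonempty proper subset T ⊂ S. -/

import Mathlib

/-- Raw vertex names for the auxiliary graph `A_α`: the special vertex `top = d_α`,
vertices `d S`, and vertices `x S`. -/
inductive AV : Type where
  | top : AV
  | d : Finset ℕ → AV
  | x : Finset ℕ → AV
deriving DecidableEq

/-- The vertices actually present in `A_α`: `d_α`; `d S` for nonempty
`S ⊆ {1, …, α-1}`; and `x S` for `S ⊆ {1, …, α}` with `|S| ≥ 2`. -/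
def AValid (α : ℕ) : AV → Prop
  | AV.top => True
  | AV.d S => S.Nonempty ∧ S ⊆ Finset.Icc 1 (α - 1)
  | AV.x S => 2 ≤ S.card ∧ S ⊆ Finset.Icc 1 α

/-- One-sided adjacency for `A_α`: `d_α x_S` when `α ∈ S`; `d_S x_T` when
`S ∩ T ≠ ∅`; `x_S x_T` when `S ≠ T` and `S ∩ T ≠ ∅`. -/
def AAdj (α : ℕ) : AV → AV → Prop
  | AV.top, AV.x S => α ∈ S
  | AV.d S, AV.x T => (S ∩ T).Nonempty
  | AV.x S, AV.x T => S ≠ T ∧ (S ∩ T).Nonempty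
  | _, _ => False

/-- The auxiliary graph `A_α`, on the valid vertices. -/
def Agraph (α : ℕ) : SimpleGraph {v : AV // AValid α v} where
  Adj a b := AAdj α a.1 b.1 ∨ AAdj α b.1 a.1
  symm := ⟨fun _ _ h => Or.symm h⟩
  loopless := ⟨by
    rintro ⟨v, hv⟩ h
    rcases v with _ | S | S <;> simp only [AAdj] at h <;> tauto⟩

/-- The vertex `d_α` of `A_α`. -/
def dTop (α : ℕ) : {v : AV // AValid α v} := ⟨AV.top, trivial⟩

/-- The set `D_α = {d_S : S ⊆ {1, …, α-1}, S ≠ ∅}` of vertices of `A_α`. -/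
def Dset (α : ℕ) : Set {v : AV // AValid α v} := {v | ∃ S, v.1 = AV.d S}

/-- `C` is an `A`-`B` cut in `G`: the graph `G - C` (i.e. the subgraph of `G`
induced on `Cᶜ`) contains no path from `A \ C` to `B \ C`. -/
def IsCut {V : Type*} (G : SimpleGraph V) (A B C : Set V) : Prop :=
  ∀ (a b : ↥(Cᶜ : Set V)), (a : V) ∈ A → (b : V) ∈ B →
    ¬ (G.induce (Cᶜ : Set V)).Reachable a b

/-- `C` is a minimal `A`-`B` cut in `G`. -/
def IsMinimalCut {V : Type*} (G : SimpleGraph V) (A B C : Set V) : Prop :=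
  IsCut G A B C ∧ ∀ x ∈ C, ¬ IsCut G A B (C \ {x})

/-- Validity of the vertex `x_{S ∪ {α}}` for nonempty `S ⊆ {1, …, α-1}`. -/
lemma aValid_x_union (α : ℕ) (hα : 2 ≤ α) (S : Finset ℕ)
    (hS : S ⊆ Finset.Icc 1 (α - 1)) (hne : S.Nonempty) :
    AValid α (AV.x (S ∪ {α})) := by
  have hαS : α ∉ S := by
    intro h
    have := (Finset.mem_Icc.1 (hS h)).2
    omega
  constructor
  · have hcard : (S ∪ {α}).card = S.card + 1 := by
      rw [Finset.union_comm, ← Finset.insert_eq, Finset.card_insert_of_notMem hαS]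
    have : 1 ≤ S.card := Finset.one_le_card.2 hne
    omega
  · refine Finset.union_subset (hS.trans (Finset.Icc_subset_Icc le_rfl (Nat.sub_le α 1))) ?_
    simp only [Finset.singleton_subset_iff, Finset.mem_Icc]
    omega

/-- Validity of the vertex `x_R` for `R ⊆ {1, …, α-1}` with `|R| ≥ 2`. -/
lemma aValid_x_low (α : ℕ) (R : Finset ℕ) (hR : R ⊆ Finset.Icc 1 (α - 1))
    (hcard : 2 ≤ R.card) : AValid α (AV.x R) :=
  ⟨hcard, hR.trans (Finset.Icc_subset_Icc le_rfl (Nat.sub_le α 1))⟩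

/-- A single step of a walk staying inside `s`. -/
def StepIn {V : Type*} (G : SimpleGraph V) (s : Set V) (u v : V) : Prop :=
  G.Adj u v ∧ u ∈ s ∧ v ∈ s

lemma chain_of_walk {V : Type*} (G : SimpleGraph V) {s : Set V} {a b : ↥s}
    (w : (G.induce s).Walk a b) :
    Relation.ReflTransGen (StepIn G s) a.1 b.1 := by
  induction w with
  | nil => exact .refl
  | @cons u v _ h _ ih => exact .head ⟨h, u.2, v.2⟩ ih

lemma reachable_induce_of_chain {V : Type*} (G : SimpleGraph V) {s : Set V} {a b : V}
    (h : Relation.ReflTransGen (StepIn G s) a b) (ha : a ∈ s) :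
    ∀ hb : b ∈ s, (G.induce s).Reachable ⟨a, ha⟩ ⟨b, hb⟩ := by
  induction h with
  | refl => intro hb; exact SimpleGraph.Reachable.refl _
  | @tail c v' _ hstep ih =>
      intro hb
      obtain ⟨hadj, hc, hv'⟩ := hstep
      exact (ih hc).trans (SimpleGraph.Adj.reachable (by exact hadj))

/-- Let `C` be a minimal `d_α`-`D_α` cut in `A_α` with `C ≠ {d_α}`.  If `d_S ∉ C`
for a nonempty `S ⊆ {1, …, α-1}`, then `d_T ∉ C` for every nonempty proper subset
`T ⊂ S`. -/
theorem cut_d_mono (α : ℕ) (hα : 2 ≤ α) (C : Set {v : AV // AValid α v})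
    (hC : IsMinimalCut (Agraph α) {dTop α} (Dset α) C) (hCne : C ≠ {dTop α})
    (S : Finset ℕ) (hSne : S.Nonempty) (hS : S ⊆ Finset.Icc 1 (α - 1))
    (hdS : (⟨AV.d S, hSne, hS⟩ : {v : AV // AValid α v}) ∉ C)
    (T : Finset ℕ) (hTne : T.Nonempty) (hTS : T ⊂ S) :
    (⟨AV.d T, hTne, hTS.subset.trans hS⟩ : {v : AV // AValid α v}) ∉ C := by
  intro hdT
  set G := Agraph α with hG
  set dT : {v : AV // AValid α v} := ⟨AV.d T, hTne, hTS.subset.trans hS⟩ with hdTdef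
  set dS : {v : AV // AValid α v} := ⟨AV.d S, hSne, hS⟩ with hdSdef
  -- every neighbour of dT is a neighbour of dS
  have adj_imp : ∀ c : {v : AV // AValid α v}, G.Adj c dT → G.Adj c dS := by
    rintro ⟨cv, hcv⟩ hadj
    rcases hadj with h | h
    · exfalso; cases cv <;> exact h
    · cases cv with
      | top => exact h.elim
      | d _ => exact h.elim
      | x U =>
          exact Or.inr (h.mono (Finset.inter_subset_inter hTS.subset le_rfl))
  have hTopdT : (dTop α : {v : AV // AValid α v}) ≠ dT := by
    intro h; exact AV.noConfusion (congrArg Subtype.val h)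
  have hdSdT : dS ≠ dT := by
    intro h
    have := congrArg Subtype.val h
    simp only [hdSdef, hdTdef] at this
    exact (hTS.ne.symm) (AV.d.inj this)
  -- the deleted cut is not a cut
  have hnot := hC.2 dT hdT
  rw [IsCut] at hnot
  push_neg at hnot
  obtain ⟨a, b, ha, hb, hr⟩ := hnot
  have memC : ∀ v : {v : AV // AValid α v}, v ∈ ((C \ {dT})ᶜ : Set {v : AV // AValid α v}) → v ≠ dT → v ∈ (Cᶜ : Set {v : AV // AValid α v}) := by
    intro v hv hne hvC
    exact hv ⟨hvC, hne⟩
  obtain ⟨w⟩ := hr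
  have chain := chain_of_walk G w
  have haeq : (a : {v : AV // AValid α v}) = dTop α := ha
  rw [haeq] at chain
  have hTopC : (dTop α : {v : AV // AValid α v}) ∈ (Cᶜ : Set {v : AV // AValid α v}) := memC _ (haeq ▸ a.2) hTopdT
  have hdSc : dS ∈ (Cᶜ : Set {v : AV // AValid α v}) := hdS
  -- key induction along the chain
  have key : ∀ v : {v : AV // AValid α v}, Relation.ReflTransGen (StepIn G ((C \ {dT})ᶜ : Set {v : AV // AValid α v})) (dTop α) v →
      (v ≠ dT → Relation.ReflTransGen (StepIn G (Cᶜ : Set {v : AV // AValid α v})) (dTop α) v) ∧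
      (v = dT → Relation.ReflTransGen (StepIn G (Cᶜ : Set {v : AV // AValid α v})) (dTop α) dS) := by
    intro v h
    induction h with
    | refl =>
        exact ⟨fun _ => .refl, fun h => absurd h hTopdT⟩
    | @tail c v' hc hstep ih =>
        obtain ⟨hadj, hcmem, hvmem⟩ := hstep
        constructor
        · intro hv'
          have hv'C : v' ∉ C := memC _ hvmem hv'
          by_cases hcT : c = dT
          · have hchain := ih.2 hcT
            have hadj' : G.Adj dS v' := ((adj_imp v' (hcT ▸ hadj.symm)).symm)
            exact hchain.tail ⟨hadj', hdSc, hv'C⟩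
          · have hchain := ih.1 hcT
            exact hchain.tail ⟨hadj, memC _ hcmem hcT, hv'C⟩
        · intro hv'
          have hcT : c ≠ dT := by
            intro h; rw [h, hv'] at hadj; exact G.loopless.irrefl _ hadj
          have hchain := ih.1 hcT
          have hadj' : G.Adj c dS := adj_imp c (hv' ▸ hadj)
          exact hchain.tail ⟨hadj', memC _ hcmem hcT, hdSc⟩
  obtain ⟨S', hbS'⟩ := hb
  by_cases hbT : (b : {v : AV // AValid α v}) = dT
  · have hchain := (key _ chain).2 hbT
    exact hC.1 ⟨dTop α, hTopC⟩ ⟨dS, hdSc⟩ rfl ⟨S, rfl⟩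
      (reachable_induce_of_chain G hchain hTopC hdSc)
  · have hchain := (key _ chain).1 hbT
    have hbC : (b : {v : AV // AValid α v}) ∉ C := memC _ b.2 hbT
    exact hC.1 ⟨dTop α, hTopC⟩ ⟨(b : {v : AV // AValid α v}), hbC⟩ rfl ⟨S', hbS'⟩
      (reachable_induce_of_chain G hchain hTopC hbC)
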